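/- Let h be the 5-dimensional real Lie algebra with Maurer–Cartan relations dθ^1=0, dθ^2=-θ^1∧θ^2, dθ^3=θ^1∧θ^3, dθ^4=2θ^1∧θ^4, dθ^5=θ^2∧θ^3. The 2-cochain θ^3∧θ^4 is d_{-3θ^1}-closed, i.e., d(θ^3∧θ^4) − 3 θ^1∧θ^3∧θ^4 = 0, but it is not in the image of d_{-3θ^1} : C^1(h,ℝ) → C^2(h,ℝ). -/

import Mathlib

open scoped BigOperators

/-- The space of real-valued `k`-cochains on `L` (as bare functions). -/
abbrev Cochain (L : Type*) (k : ℕ) := (Fin k → L) → ℝ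

variable {L : Type*} [LieRing L] [LieAlgebra ℝ L]

/-- A cochain is an alternating multilinear map, i.e. an element of `Hom(Λ^k g, ℝ)`. -/
def IsAltMap {k : ℕ} (θ : Cochain L k) : Prop :=
  ∃ f : AlternatingMap ℝ L ℝ (Fin k), ⇑f = θ

/-- The Chevalley–Eilenberg differential with trivial coefficients:
`(dθ)(X_0,…,X_k) = ∑_{p<q} (-1)^{p+q} θ([X_p,X_q],X_0,…,X̂_p,…,X̂_q,…,X_k)`. -/
def CEd : {k : ℕ} → Cochain L k → Cochain L (k + 1)
  | 0, _ => fun _ => 0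
  | (k + 1), θ => fun X =>
      ∑ p : Fin (k + 2), ∑ q : Fin (k + 2),
        if h : (p : ℕ) < (q : ℕ) then
          ((-1 : ℝ) ^ ((p : ℕ) + (q : ℕ))) *
            θ (Fin.cons ⁅X p, X q⁆
                (Fin.removeNth ⟨(p : ℕ), lt_of_lt_of_le h (Nat.lt_succ_iff.mp q.isLt)⟩
                  (Fin.removeNth q X)))
        else 0

/-- The wedge product `ω ∧ θ` of a 1-cochain with a `k`-cochain. -/
def oneWedge {k : ℕ} (ω : L → ℝ) (θ : Cochain L k) : Cochain L (k + 1) :=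
  fun X => ∑ i : Fin (k + 1), ((-1 : ℝ) ^ (i : ℕ)) * ω (X i) * θ (Fin.removeNth i X)

/-- The deformed differential `d_{λω} θ = dθ + λ ω ∧ θ`. -/
def dDef {k : ℕ} (lam : ℝ) (ω : L → ℝ) (θ : Cochain L k) : Cochain L (k + 1) :=
  CEd θ + lam • oneWedge ω θ

/-- The submodule of alternating multilinear `k`-cochains, i.e. `C^k(g,ℝ) = Hom(Λ^k g, ℝ)`. -/
def AltSub (L : Type*) [LieRing L] [LieAlgebra ℝ L] (k : ℕ) : Submodule ℝ (Cochain L k) where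
  carrier := {θ | IsAltMap θ}
  add_mem' := by rintro θ₁ θ₂ ⟨f, rfl⟩ ⟨g, rfl⟩; exact ⟨f + g, rfl⟩
  zero_mem' := ⟨0, rfl⟩
  smul_mem' := by rintro c θ ⟨f, rfl⟩; exact ⟨c • f, rfl⟩

/-- The Chevalley–Eilenberg differential as a linear map. -/
def CEdL (L : Type*) [LieRing L] [LieAlgebra ℝ L] (k : ℕ) :
    Cochain L k →ₗ[ℝ] Cochain L (k + 1) where
  toFun := CEd
  map_add' θ₁ θ₂ := by
    cases k with
    | zero => funext X; exact (zero_add (0:ℝ)).symm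
    | succ k =>
      funext X
      show _ = CEd θ₁ X + CEd θ₂ X
      simp only [CEd, Pi.add_apply]
      rw [← Finset.sum_add_distrib]
      refine Finset.sum_congr rfl fun p _ => ?_
      rw [← Finset.sum_add_distrib]
      refine Finset.sum_congr rfl fun q _ => ?_
      split_ifs <;> simp [mul_add]
  map_smul' c θ := by
    cases k with
    | zero => funext X; exact (smul_zero c).symm
    | succ k =>
      funext X
      show _ = c * CEd θ X
      simp only [CEd, Pi.smul_apply, smul_eq_mul]
      rw [Finset.mul_sum]
      refine Finset.sum_congr rfl fun p _ => ?_
      rw [Finset.mul_sum]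
      refine Finset.sum_congr rfl fun q _ => ?_
      split_ifs with h
      · ring
      · exact (mul_zero c).symm

/-- The operator `θ ↦ ω ∧ θ` as a linear map. -/
def oneWedgeL (L : Type*) [LieRing L] [LieAlgebra ℝ L] (ω : L → ℝ) (k : ℕ) :
    Cochain L k →ₗ[ℝ] Cochain L (k + 1) where
  toFun := oneWedge ω
  map_add' θ₁ θ₂ := by
    funext X
    simp [oneWedge, mul_add, Finset.sum_add_distrib]
  map_smul' c θ := by
    funext X
    simp only [oneWedge, Pi.smul_apply, smul_eq_mul, RingHom.id_apply]
    rw [Finset.mul_sum]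
    exact Finset.sum_congr rfl fun i _ => by ring

/-- The deformed differential `d_{λω}` as a linear map. -/
noncomputable def dDefL (L : Type*) [LieRing L] [LieAlgebra ℝ L]
    (lam : ℝ) (ω : L → ℝ) (k : ℕ) : Cochain L k →ₗ[ℝ] Cochain L (k + 1) :=
  CEdL L k + lam • oneWedgeL L ω k

/-- Deformed `k`-cocycles: alternating cochains with `d_{λω} θ = 0`. -/
noncomputable def Zdef (L : Type*) [LieRing L] [LieAlgebra ℝ L]
    (lam : ℝ) (ω : L → ℝ) (k : ℕ) : Submodule ℝ (Cochain L k) :=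
  AltSub L k ⊓ LinearMap.ker (dDefL L lam ω k)

/-- Deformed `(k+1)`-coboundaries: images under `d_{λω}` of alternating `k`-cochains. -/
noncomputable def Bdef (L : Type*) [LieRing L] [LieAlgebra ℝ L]
    (lam : ℝ) (ω : L → ℝ) (k : ℕ) : Submodule ℝ (Cochain L (k + 1)) :=
  Submodule.map (dDefL L lam ω k) (AltSub L k)

/-- The deformed cohomology `H^{k+1}_{λω}(g)` = closed forms modulo exact forms. -/
noncomputable abbrev Hdef (L : Type*) [LieRing L] [LieAlgebra ℝ L]
    (lam : ℝ) (ω : L → ℝ) (k : ℕ) :=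
  Zdef L lam ω (k + 1) ⧸
    Submodule.comap (Zdef L lam ω (k + 1)).subtype (Bdef L lam ω k)

/-- The 1-cochain associated to a linear functional. -/
def c1 {L : Type*} (f : L → ℝ) : Cochain L 1 := fun X => f (X 0)

/-- The wedge product `f ∧ g` of two 1-forms, as a 2-cochain. -/
def w2 {L : Type*} (f g : L → ℝ) : Cochain L 2 :=
  fun X => f (X 0) * g (X 1) - f (X 1) * g (X 0)


section AuxBracket
variable {H : Type*} [LieRing H] [LieAlgebra ℝ H] (E : Module.Basis (Fin 5) ℝ H)

theorem aux_brepr (x y : H) (i : Fin 5) :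
    E.repr ⁅x, y⁆ i = ∑ j : Fin 5, ∑ k : Fin 5,
      E.repr x j * (E.repr y k * E.repr ⁅E j, E k⁆ i) := by
  have hsl : ∀ (f : Fin 5 → H) (z : H), ⁅∑ j : Fin 5, f j, z⁆ = ∑ j : Fin 5, ⁅f j, z⁆ := by
    intro f z
    exact sum_lie Finset.univ f z
  have hls : ∀ (z : H) (f : Fin 5 → H), ⁅z, ∑ j : Fin 5, f j⁆ = ∑ j : Fin 5, ⁅z, f j⁆ := by
    intro z f
    exact map_sum ((LieAlgebra.ad ℝ H) z) f Finset.univ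
  conv_lhs => rw [← E.sum_repr x, ← E.sum_repr y]
  rw [hsl]
  simp only [hls, smul_lie, lie_smul, map_sum, map_smul, Finsupp.smul_apply,
    Finsupp.coe_finset_sum, Finset.sum_apply, smul_eq_mul]
  exact Finset.sum_congr rfl fun j _ => Finset.sum_congr rfl fun k _ => by ring

variable (b01 : ⁅E 0, E 1⁆ = E 1) (b02 : ⁅E 0, E 2⁆ = -E 2)
    (b03 : ⁅E 0, E 3⁆ = (-2 : ℝ) • E 3) (b12 : ⁅E 1, E 2⁆ = -E 4)
    (b04 : ⁅E 0, E 4⁆ = 0) (b13 : ⁅E 1, E 3⁆ = 0) (b14 : ⁅E 1, E 4⁆ = 0)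
    (b23 : ⁅E 2, E 3⁆ = 0) (b24 : ⁅E 2, E 4⁆ = 0) (b34 : ⁅E 3, E 4⁆ = 0)

include b01 b02 b03 b12 b04 b13 b14 b23 b24 b34 in
theorem aux_brepr2 (x y : H) :
    E.repr ⁅x, y⁆ 2 = E.repr x 2 * E.repr y 0 - E.repr x 0 * E.repr y 2 := by
  have rev : ∀ u v : H, ⁅u, v⁆ = -⁅v, u⁆ := fun u v => by rw [← neg_neg ⁅u,v⁆, lie_skew]
  rw [aux_brepr]
  simp only [Fin.sum_univ_five]
  rw [rev (E 1) (E 0), rev (E 2) (E 0), rev (E 3) (E 0), rev (E 4) (E 0),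
    rev (E 2) (E 1), rev (E 3) (E 1), rev (E 4) (E 1), rev (E 3) (E 2),
    rev (E 4) (E 2), rev (E 4) (E 3)]
  simp [b01, b02, b03, b04, b12, b13, b14, b23, b24, b34, Module.Basis.repr_self,
    Finsupp.single_apply, lie_self]
  ring

include b01 b02 b03 b12 b04 b13 b14 b23 b24 b34 in
theorem aux_brepr3 (x y : H) :
    E.repr ⁅x, y⁆ 3 = 2 * (E.repr x 3 * E.repr y 0 - E.repr x 0 * E.repr y 3) := by
  have rev : ∀ u v : H, ⁅u, v⁆ = -⁅v, u⁆ := fun u v => by rw [← neg_neg ⁅u,v⁆, lie_skew]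
  rw [aux_brepr]
  simp only [Fin.sum_univ_five]
  rw [rev (E 1) (E 0), rev (E 2) (E 0), rev (E 3) (E 0), rev (E 4) (E 0),
    rev (E 2) (E 1), rev (E 3) (E 1), rev (E 4) (E 1), rev (E 3) (E 2),
    rev (E 4) (E 2), rev (E 4) (E 3)]
  simp [b01, b02, b03, b04, b12, b13, b14, b23, b24, b34, Module.Basis.repr_self,
    Finsupp.single_apply, lie_self]
  ring

end AuxBracket

/-- `θ^3∧θ^4` is `d_{-3θ^1}`-closed but not in the image of
`d_{-3θ^1} : C^1(h,ℝ) → C^2(h,ℝ)`. -/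
theorem theta34_closed_not_exact
    (H : Type*) [LieRing H] [LieAlgebra ℝ H] (E : Module.Basis (Fin 5) ℝ H)
    (b01 : ⁅E 0, E 1⁆ = E 1) (b02 : ⁅E 0, E 2⁆ = -E 2)
    (b03 : ⁅E 0, E 3⁆ = (-2 : ℝ) • E 3) (b12 : ⁅E 1, E 2⁆ = -E 4)
    (b04 : ⁅E 0, E 4⁆ = 0) (b13 : ⁅E 1, E 3⁆ = 0) (b14 : ⁅E 1, E 4⁆ = 0)
    (b23 : ⁅E 2, E 3⁆ = 0) (b24 : ⁅E 2, E 4⁆ = 0) (b34 : ⁅E 3, E 4⁆ = 0) :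
    dDef (-3) (fun v => E.repr v 0)
        (w2 (fun v => E.repr v 2) (fun v => E.repr v 3)) = 0 ∧
    ∀ α : Cochain H 1, IsAltMap α →
      dDef (-3) (fun v => E.repr v 0) α ≠
        w2 (fun v => E.repr v 2) (fun v => E.repr v 3) := by
  constructor
  · funext X
    simp only [dDef, Pi.add_apply, Pi.smul_apply, smul_eq_mul, CEd, oneWedge, w2,
      Fin.sum_univ_succ, Fin.sum_univ_zero, Fin.isValue]
    norm_num [Fin.removeNth, Fin.succAbove, Fin.cons]
    simp only [show (1:Fin 2)=Fin.succ 0 from rfl, Fin.cases_succ, Fin.tail,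
      Fin.removeNth, Fin.succAbove, Fin.lt_def, Fin.val_zero, Fin.val_one, Fin.val_two]
    norm_num
    rw [aux_brepr2 E b01 b02 b03 b12 b04 b13 b14 b23 b24 b34 (X 0) (X 1),
      aux_brepr2 E b01 b02 b03 b12 b04 b13 b14 b23 b24 b34 (X 0) (X 2),
      aux_brepr2 E b01 b02 b03 b12 b04 b13 b14 b23 b24 b34 (X 1) (X 2),
      aux_brepr3 E b01 b02 b03 b12 b04 b13 b14 b23 b24 b34 (X 0) (X 1),
      aux_brepr3 E b01 b02 b03 b12 b04 b13 b14 b23 b24 b34 (X 0) (X 2),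
      aux_brepr3 E b01 b02 b03 b12 b04 b13 b14 b23 b24 b34 (X 1) (X 2)]
    ring
  · rintro α ⟨f, hf⟩ heq
    have h2 := congrFun heq ![E 2, E 3]
    simp only [dDef, Pi.add_apply, Pi.smul_apply, smul_eq_mul, CEd, oneWedge, w2,
      Fin.sum_univ_succ, Fin.sum_univ_zero, Fin.isValue] at h2
    norm_num [Fin.removeNth, Fin.succAbove, Fin.cons] at h2
    rw [← hf] at h2
    have hz : f (Fin.cons (0 : H) (Fin.tail (Fin.removeNth (1 : Fin 2) ![E 2, E 3]))) = 0 := by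
      apply f.map_coord_zero (i := 0)
      simp
    rw [b23] at h2
    simp [hz, Finsupp.single_apply] at h2
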